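/- arXiv:1401.6936 — 2 statements merged into one kernel-verified Lean document; each statement's English description precedes it below -/
import Mathlib

section
/- Let G be a finite nonempty graph satisfying Γ(G) = Δ(G) + 1, where Δ(G) is the maximum degree of G. Then for every finite nonempty graph H, Γ(G[H]) = Γ(G) · Γ(H). -/
open SimpleGraph

/-- A greedy `k`-coloring of `G`: a partition of the vertex set into nonempty stable sets
`S 0, …, S (k-1)` such that for all `j < i`, every vertex of `S i` has a neighbor in `S j`. -/
def IsGreedyColoring {V : Type*} (G : SimpleGraph V) (k : ℕ) (S : Fin k → Set V) : Prop :=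
  (∀ v : V, ∃! i, v ∈ S i) ∧
  (∀ i, (S i).Nonempty) ∧
  (∀ i, ∀ v ∈ S i, ∀ w ∈ S i, ¬ G.Adj v w) ∧
  (∀ i j : Fin k, j < i → ∀ v ∈ S i, ∃ w ∈ S j, G.Adj v w)

/-- The Grundy number `Γ(G)`: the largest `k` such that `G` has a greedy `k`-coloring. -/
noncomputable def grundy {V : Type*} [Fintype V] (G : SimpleGraph V) : ℕ :=
  sSup {k | ∃ S : Fin k → Set V, IsGreedyColoring G k S}

/-- Lexicographic product `G[H]`: `(a,x)` adjacent to `(b,y)` iff `ab ∈ E(G)`,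
or `a = b` and `xy ∈ E(H)`. -/
def lexProd {α β : Type*} (G : SimpleGraph α) (H : SimpleGraph β) :
    SimpleGraph (α × β) where
  Adj x y := G.Adj x.1 y.1 ∨ (x.1 = y.1 ∧ H.Adj x.2 y.2)
  symm := ⟨fun _ _ h => by
    rcases h with h | ⟨h1, h2⟩
    · exact Or.inl (G.adj_symm h)
    · exact Or.inr ⟨h1.symm, H.adj_symm h2⟩⟩
  loopless := ⟨fun _ h => by
    rcases h with h | ⟨-, h2⟩
    · exact G.ne_of_adj h rfl
    · exact H.ne_of_adj h2 rfl⟩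

/-- Maximum degree `Δ(G)`. -/
noncomputable def maxDeg {V : Type*} [Fintype V] (G : SimpleGraph V) : ℕ :=
  Finset.univ.sup fun v => (G.neighborSet v).ncard

lemma greedySet_bddAbove {V : Type*} [Fintype V] (G : SimpleGraph V) :
    BddAbove {k | ∃ S : Fin k → Set V, IsGreedyColoring G k S} := by
  refine ⟨Fintype.card V, fun k hk => ?_⟩
  obtain ⟨S, hpart, hne, -, -⟩ := hk
  choose f hf using hne
  have hinj : Function.Injective f := by
    intro i j hij
    obtain ⟨i', -, huniq⟩ := hpart (f i)
    exact (huniq i (hf i)).trans (huniq j (by rw [hij]; exact hf j)).symm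
  calc k = Fintype.card (Fin k) := (Fintype.card_fin k).symm
    _ ≤ Fintype.card V := Fintype.card_le_of_injective f hinj

lemma exists_greedy_aux {V : Type*} [Fintype V] (G : SimpleGraph V) (T : Finset V) :
    ∃ (k : ℕ) (S : Fin k → Set V),
      (∀ v ∈ T, ∃! i, v ∈ S i) ∧ (∀ i, ∀ x ∈ S i, x ∈ T) ∧ (∀ i, (S i).Nonempty) ∧
      (∀ i, ∀ v ∈ S i, ∀ w ∈ S i, ¬ G.Adj v w) ∧
      (∀ i j : Fin k, j < i → ∀ v ∈ S i, ∃ w ∈ S j, G.Adj v w) := by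
  classical
  induction T using Finset.strongInduction with
  | _ T ih =>
    rcases T.eq_empty_or_nonempty with rfl | ⟨t, ht⟩
    · exact ⟨0, Fin.elim0, by simp, fun i => i.elim0, fun i => i.elim0,
        fun i => i.elim0, fun i => i.elim0⟩
    · set A : Finset (Finset V) := T.powerset.filter
        (fun M => M.Nonempty ∧ ∀ v ∈ M, ∀ w ∈ M, ¬ G.Adj v w) with hA
      have hAne : A.Nonempty := by
        refine ⟨{t}, ?_⟩
        simp only [hA, Finset.mem_filter, Finset.mem_powerset]
        refine ⟨Finset.singleton_subset_iff.mpr ht, Finset.singleton_nonempty t, ?_⟩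
        intro v hv w hw
        rw [Finset.mem_singleton] at hv hw
        subst hv; subst hw
        exact G.irrefl
      obtain ⟨M, hMA, hmax⟩ := Finset.exists_max_image A Finset.card hAne
      rw [hA, Finset.mem_filter, Finset.mem_powerset] at hMA
      obtain ⟨hMT, hMne, hMst⟩ := hMA
      have hkey : ∀ v ∈ T \ M, ∃ w ∈ M, G.Adj v w := by
        intro v hv
        by_contra hcon
        push_neg at hcon
        have hvT := (Finset.mem_sdiff.mp hv).1
        have hvM := (Finset.mem_sdiff.mp hv).2
        have hins : insert v M ∈ A := by
          rw [hA, Finset.mem_filter, Finset.mem_powerset]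
          refine ⟨Finset.insert_subset hvT hMT, ⟨v, Finset.mem_insert_self _ _⟩, ?_⟩
          intro x hx y hy h
          rcases Finset.mem_insert.mp hx with rfl | hx'
          · rcases Finset.mem_insert.mp hy with rfl | hy'
            · exact G.irrefl h
            · exact hcon y hy' h
          · rcases Finset.mem_insert.mp hy with rfl | hy'
            · exact hcon x hx' (G.adj_symm h)
            · exact hMst x hx' y hy' h
        have h1 := hmax _ hins
        rw [Finset.card_insert_of_notMem hvM] at h1
        omega
      obtain ⟨k, S, hpart, hsub, hne, hst, hgr⟩ := ih (T \ M) (Finset.sdiff_ssubset hMT hMne)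
      refine ⟨k + 1, Fin.cases (↑M) S, ?_, ?_, ?_, ?_, ?_⟩
      · intro v hv
        by_cases hvM : v ∈ M
        · refine ⟨0, by simpa using hvM, ?_⟩
          intro i' hi'
          rcases Fin.eq_zero_or_eq_succ i' with rfl | ⟨j, rfl⟩
          · rfl
          · exfalso
            have := hsub j v (by simpa using hi')
            exact (Finset.mem_sdiff.mp this).2 hvM
        · obtain ⟨i, hi, huniq⟩ := hpart v (Finset.mem_sdiff.mpr ⟨hv, hvM⟩)
          refine ⟨i.succ, by simpa using hi, ?_⟩
          intro i' hi'
          rcases Fin.eq_zero_or_eq_succ i' with rfl | ⟨j, rfl⟩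
          · exact absurd (by simpa using hi') hvM
          · rw [huniq j (by simpa using hi')]
      · intro i x hx
        rcases Fin.eq_zero_or_eq_succ i with rfl | ⟨j, rfl⟩
        · exact hMT (by simpa using hx)
        · exact (Finset.mem_sdiff.mp (hsub j x (by simpa using hx))).1
      · intro i
        rcases Fin.eq_zero_or_eq_succ i with rfl | ⟨j, rfl⟩
        · simpa using hMne
        · simpa using hne j
      · intro i v hv w hw
        rcases Fin.eq_zero_or_eq_succ i with rfl | ⟨j, rfl⟩
        · exact hMst v (by simpa using hv) w (by simpa using hw)
        · exact hst j v (by simpa using hv) w (by simpa using hw)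
      · intro i j hji v hv
        rcases Fin.eq_zero_or_eq_succ i with rfl | ⟨i', rfl⟩
        · exact absurd hji (by simp [Fin.lt_def])
        · rcases Fin.eq_zero_or_eq_succ j with rfl | ⟨j', rfl⟩
          · obtain ⟨w, hwM, hadj⟩ := hkey v (hsub i' v (by simpa using hv))
            exact ⟨w, by simpa using hwM, hadj⟩
          · obtain ⟨w, hw, hadj⟩ := hgr i' j' (by
              rw [Fin.lt_def] at hji ⊢
              simpa using hji) v (by simpa using hv)
            exact ⟨w, by simpa using hw, hadj⟩

lemma lexProd_greedy {α β : Type*} (G : SimpleGraph α) (H : SimpleGraph β)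
    {k l : ℕ} {S : Fin k → Set α} {T : Fin l → Set β} (hl : 0 < l)
    (hS : IsGreedyColoring G k S) (hT : IsGreedyColoring H l T) :
    ∃ U : Fin (k * l) → Set (α × β), IsGreedyColoring (lexProd G H) (k * l) U := by
  obtain ⟨Sp, Sne, Sst, Sgr⟩ := hS
  obtain ⟨Tp, Tne, Tst, Tgr⟩ := hT
  have hq : ∀ m : Fin (k * l), m.1 / l < k := fun m =>
    (Nat.div_lt_iff_lt_mul hl).mpr m.2
  refine ⟨fun m => {p | p.1 ∈ S ⟨m.1 / l, hq m⟩ ∧ p.2 ∈ T ⟨m.1 % l, Nat.mod_lt _ hl⟩},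
    ?_, ?_, ?_, ?_⟩
  · intro p
    obtain ⟨i, hi, hiu⟩ := Sp p.1
    obtain ⟨j, hj, hju⟩ := Tp p.2
    have hlt : j.1 + i.1 * l < k * l := by
      calc j.1 + i.1 * l < l + i.1 * l := by omega
        _ = (i.1 + 1) * l := by ring
        _ ≤ k * l := Nat.mul_le_mul_right l i.2
    have hdiv : (j.1 + i.1 * l) / l = i.1 := by
      rw [Nat.add_mul_div_right _ _ hl, Nat.div_eq_of_lt j.2]; omega
    have hmod : (j.1 + i.1 * l) % l = j.1 := by
      rw [Nat.add_mul_mod_self_right, Nat.mod_eq_of_lt j.2]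
    refine ⟨⟨j.1 + i.1 * l, hlt⟩, ⟨?_, ?_⟩, ?_⟩
    · have h' : (⟨(j.1 + i.1 * l) / l, hq ⟨j.1 + i.1 * l, hlt⟩⟩ : Fin k) = i := Fin.ext hdiv
      show p.1 ∈ S ⟨(j.1 + i.1 * l) / l, hq ⟨j.1 + i.1 * l, hlt⟩⟩
      rw [h']; exact hi
    · have h' : (⟨(j.1 + i.1 * l) % l, Nat.mod_lt _ hl⟩ : Fin l) = j := Fin.ext hmod
      show p.2 ∈ T ⟨(j.1 + i.1 * l) % l, Nat.mod_lt _ hl⟩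
      rw [h']; exact hj
    · rintro m ⟨hm1, hm2⟩
      have e1 : m.1 / l = i.1 := congrArg Fin.val (hiu _ hm1)
      have e2 : m.1 % l = j.1 := congrArg Fin.val (hju _ hm2)
      have e3 := Nat.div_add_mod m.1 l
      apply Fin.ext
      simp only []
      rw [← e3, e1, e2]; ring
  · intro m
    obtain ⟨a, ha⟩ := Sne ⟨m.1 / l, hq m⟩
    obtain ⟨x, hx⟩ := Tne ⟨m.1 % l, Nat.mod_lt _ hl⟩
    exact ⟨(a, x), ha, hx⟩
  · rintro m p ⟨hp1, hp2⟩ q ⟨hq1, hq2⟩ hadj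
    rcases hadj with h | ⟨heq, h⟩
    · exact Sst _ p.1 hp1 q.1 hq1 h
    · exact Tst _ p.2 hp2 q.2 hq2 h
  · rintro m m' hlt p ⟨hp1, hp2⟩
    have hle : m'.1 / l ≤ m.1 / l := Nat.div_le_div_right (le_of_lt hlt)
    rcases lt_or_eq_of_le hle with hdlt | hdeq
    · obtain ⟨b, hb, hadj⟩ := Sgr ⟨m.1 / l, hq m⟩ ⟨m'.1 / l, hq m'⟩ hdlt p.1 hp1
      obtain ⟨y, hy⟩ := Tne ⟨m'.1 % l, Nat.mod_lt _ hl⟩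
      exact ⟨(b, y), ⟨hb, hy⟩, Or.inl hadj⟩
    · have hmlt : m'.1 % l < m.1 % l := by
        have e1 := Nat.div_add_mod m'.1 l
        have e2 := Nat.div_add_mod m.1 l
        rw [hdeq] at e1
        have hv : m'.1 < m.1 := hlt
        generalize l * (m.1 / l) = c at e1 e2
        omega
      obtain ⟨y, hy, hadj⟩ := Tgr ⟨m.1 % l, Nat.mod_lt _ hl⟩ ⟨m'.1 % l, Nat.mod_lt _ hl⟩
        hmlt p.2 hp2
      refine ⟨(p.1, y), ⟨?_, hy⟩, Or.inr ⟨rfl, hadj⟩⟩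
      have : (⟨m'.1 / l, hq m'⟩ : Fin k) = ⟨m.1 / l, hq m⟩ := Fin.ext hdeq
      rw [this]; exact hp1

lemma lexProd_grundy_le {α β : Type*} [Fintype α] [Fintype β]
    (G : SimpleGraph α) (H : SimpleGraph β)
    {N : ℕ} {U : Fin N → Set (α × β)} (hU : IsGreedyColoring (lexProd G H) N U) :
    N ≤ (maxDeg G + 1) * grundy H := by
  classical
  obtain ⟨Up, Une, Ust, Ugr⟩ := hU
  set I : α → Finset (Fin N) := fun a =>
    Finset.univ.filter (fun i => ∃ x, (a, x) ∈ U i) with hI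
  have hImem : ∀ a i, i ∈ I a ↔ ∃ x, (a, x) ∈ U i := by
    intro a i; simp [hI]
  have hIcard : ∀ a, (I a).card ≤ grundy H := by
    intro a
    set e := (I a).orderIsoOfFin rfl with he
    have hmem : (I a).card ∈ {m | ∃ Tm : Fin m → Set β, IsGreedyColoring H m Tm} := by
      refine ⟨fun t => {x | (a, x) ∈ U (e t).1}, ?_, ?_, ?_, ?_⟩
      · intro x
        obtain ⟨i, hi, hiu⟩ := Up (a, x)
        have hiI : i ∈ I a := (hImem a i).mpr ⟨x, hi⟩
        refine ⟨e.symm ⟨i, hiI⟩, ?_, ?_⟩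
        · show (a, x) ∈ U (e (e.symm ⟨i, hiI⟩)).1
          rw [e.apply_symm_apply]
          exact hi
        · intro t ht
          have : (e t).1 = i := hiu _ ht
          have h2 : e t = ⟨i, hiI⟩ := Subtype.ext this
          rw [← h2, e.symm_apply_apply]
      · intro t
        obtain ⟨x, hx⟩ := (hImem a (e t).1).mp (e t).2
        exact ⟨x, hx⟩
      · intro t x hx y hy hadj
        exact Ust (e t).1 (a, x) hx (a, y) hy (Or.inr ⟨rfl, hadj⟩)
      · intro t t' htt' x hx
        have hlt : ((e t').1 : Fin N) < (e t).1 := by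
          have := e.lt_iff_lt.mpr htt'
          exact this
        obtain ⟨w, hw, hadj⟩ := Ugr (e t).1 (e t').1 hlt (a, x) hx
        rcases hadj with h | ⟨heq, h2⟩
        · exfalso
          obtain ⟨x', hx'⟩ := (hImem a (e t').1).mp (e t').2
          exact Ust (e t').1 (a, x') hx' w hw (Or.inl h)
        · refine ⟨w.2, ?_, h2⟩
          show (a, w.2) ∈ U (e t').1
          have : (a, w.2) = w := by
            obtain ⟨w1, w2⟩ := w
            simp only [] at heq
            rw [heq]
          rw [this]; exact hw
    exact le_csSup (greedySet_bddAbove H) hmem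
  rcases Nat.eq_zero_or_pos N with rfl | hN
  · exact Nat.zero_le _
  obtain ⟨m, rfl⟩ : ∃ m, N = m + 1 := ⟨N - 1, by omega⟩
  obtain ⟨p0, hp0⟩ := Une (Fin.last m)
  set a0 := p0.1 with ha0
  set nb : Finset α := (G.neighborSet a0).toFinite.toFinset with hnb
  set B : Finset α := insert a0 nb with hB
  have hcover : (Finset.univ : Finset (Fin (m + 1))) ⊆ B.biUnion I := by
    intro i _
    rw [Finset.mem_biUnion]
    by_cases hi : i = Fin.last m
    · subst hi
      exact ⟨a0, Finset.mem_insert_self _ _,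
        (hImem a0 _).mpr ⟨p0.2, by rw [ha0, Prod.mk.eta]; exact hp0⟩⟩
    · have hlt : i < Fin.last m := lt_of_le_of_ne (Fin.le_last i) hi
      obtain ⟨w, hw, hadj⟩ := Ugr (Fin.last m) i hlt p0 hp0
      rcases hadj with h | ⟨heq, -⟩
      · refine ⟨w.1, Finset.mem_insert_of_mem ?_, (hImem w.1 i).mpr ⟨w.2, by
          rw [Prod.mk.eta]; exact hw⟩⟩
        rw [hnb, Set.Finite.mem_toFinset]
        exact h
      · refine ⟨a0, Finset.mem_insert_self _ _, (hImem a0 i).mpr ⟨w.2, ?_⟩⟩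
        rw [ha0, heq, Prod.mk.eta]; exact hw
  have hBcard : B.card ≤ maxDeg G + 1 := by
    have h1 : B.card ≤ nb.card + 1 := Finset.card_insert_le _ _
    have h2 : nb.card = (G.neighborSet a0).ncard := (Set.ncard_eq_toFinset_card _ _).symm
    have h3 : (G.neighborSet a0).ncard ≤ maxDeg G := by
      rw [maxDeg]
      exact Finset.le_sup (f := fun v => (G.neighborSet v).ncard) (Finset.mem_univ a0)
    omega
  calc m + 1 = (Finset.univ : Finset (Fin (m + 1))).card := by simp
    _ ≤ (B.biUnion I).card := Finset.card_le_card hcover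
    _ ≤ ∑ a ∈ B, (I a).card := Finset.card_biUnion_le
    _ ≤ ∑ _a ∈ B, grundy H := Finset.sum_le_sum fun a _ => hIcard a
    _ = B.card * grundy H := by rw [Finset.sum_const, smul_eq_mul]
    _ ≤ (maxDeg G + 1) * grundy H := Nat.mul_le_mul_right _ hBcard

lemma greedySet_nonempty {V : Type*} [Fintype V] (G : SimpleGraph V) :
    {k | ∃ S : Fin k → Set V, IsGreedyColoring G k S}.Nonempty := by
  obtain ⟨k, S, h1, h2, h3, h4, h5⟩ := exists_greedy_aux G Finset.univ
  exact ⟨k, S, fun v => h1 v (Finset.mem_univ v), h3, h4, h5⟩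


/-- If `G` is a finite nonempty graph with `Γ(G) = Δ(G) + 1`, then for every finite
nonempty graph `H`, `Γ(G[H]) = Γ(G) · Γ(H)`. -/
theorem grundy_lexProd_of_grundy_eq_maxDeg_succ {α β : Type*}
    [Fintype α] [Fintype β] [Nonempty α] [Nonempty β]
    (G : SimpleGraph α) (H : SimpleGraph β) (hG : grundy G = maxDeg G + 1) :
    grundy (lexProd G H) = grundy G * grundy H := by
  classical
  have hGmem : grundy G ∈ {k | ∃ S : Fin k → Set α, IsGreedyColoring G k S} :=
    Nat.sSup_mem (greedySet_nonempty G) (greedySet_bddAbove G)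
  have hHmem : grundy H ∈ {k | ∃ S : Fin k → Set β, IsGreedyColoring H k S} :=
    Nat.sSup_mem (greedySet_nonempty H) (greedySet_bddAbove H)
  obtain ⟨S, hS⟩ := hGmem
  obtain ⟨T, hT⟩ := hHmem
  have hlpos : 0 < grundy H := by
    rcases Nat.eq_zero_or_pos (grundy H) with h0 | h
    · exfalso
      obtain ⟨v⟩ := ‹Nonempty β›
      obtain ⟨i, -, -⟩ := hT.1 v
      have := i.isLt
      omega
    · exact h
  obtain ⟨U, hU⟩ := lexProd_greedy G H hlpos hS hT
  have hmemU : grundy G * grundy H ∈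
      {k | ∃ W : Fin k → Set (α × β), IsGreedyColoring (lexProd G H) k W} := ⟨U, hU⟩
  apply le_antisymm
  · apply csSup_le ⟨_, hmemU⟩
    intro N hN
    obtain ⟨W, hW⟩ := hN
    calc N ≤ (maxDeg G + 1) * grundy H := lexProd_grundy_le G H hW
      _ = grundy G * grundy H := by rw [hG]
  · exact le_csSup (greedySet_bddAbove (lexProd G H)) hmemU
end

section
/- Let H be a finite graph with Γ(H) = 2. Then for every finite graph G, Γ(G × H) = Γ(G × K_2). -/
open SimpleGraph

def tensorProd {α β : Type*} (G : SimpleGraph α) (H : SimpleGraph β) :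
    SimpleGraph (α × β) where
  Adj x y := G.Adj x.1 y.1 ∧ H.Adj x.2 y.2
  symm := ⟨fun _ _ h => ⟨h.1.symm, h.2.symm⟩⟩
  loopless := ⟨fun _ h => G.irrefl h.1⟩

namespace GrundyAux

@[simp] lemma tensorProd_adj {α β : Type*} (G : SimpleGraph α) (H : SimpleGraph β)
    (x y : α × β) : (tensorProd G H).Adj x y ↔ G.Adj x.1 y.1 ∧ H.Adj x.2 y.2 := Iff.rfl

variable {V : Type*} {G : SimpleGraph V}

/-- A partial greedy witness: nonempty stable sets with the downward-neighbor property. -/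
def Witness (G : SimpleGraph V) (k : ℕ) (S : Fin k → Set V) : Prop :=
  (∀ i, (S i).Nonempty) ∧
  (∀ i, ∀ v ∈ S i, ∀ w ∈ S i, ¬ G.Adj v w) ∧
  (∀ i j : Fin k, j < i → ∀ v ∈ S i, ∃ w ∈ S j, G.Adj v w)

lemma Witness.not_mem_mem {k : ℕ} {S : Fin k → Set V} (h : Witness G k S) {i j : Fin k}
    (hij : j < i) {v : V} (hvi : v ∈ S i) (hvj : v ∈ S j) : False := by
  obtain ⟨w, hw, hadj⟩ := h.2.2 i j hij v hvi
  exact h.2.1 j v hvj w hw hadj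

lemma Witness.card_le [Fintype V] {k : ℕ} {S : Fin k → Set V} (h : Witness G k S) :
    k ≤ Fintype.card V := by
  classical
  have hinj : Function.Injective (fun i : Fin k => (h.1 i).choose) := by
    intro i j hij
    have hij2 : (h.1 i).choose = (h.1 j).choose := hij
    by_contra hne
    have hi := (h.1 i).choose_spec
    have hj := (h.1 j).choose_spec
    rw [hij2] at hi
    rcases lt_or_gt_of_ne hne with hlt | hlt
    · exact h.not_mem_mem hlt hj hi
    · exact h.not_mem_mem hlt hi hj
  simpa using Fintype.card_le_of_injective _ hinj

lemma bddAbove_colorings [Fintype V] (G : SimpleGraph V) :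
    BddAbove {k | ∃ S : Fin k → Set V, IsGreedyColoring G k S} := by
  refine ⟨Fintype.card V, ?_⟩
  rintro m ⟨T, hT⟩
  exact Witness.card_le ⟨hT.2.1, hT.2.2.1, hT.2.2.2⟩

lemma covered_le [Fintype V] {k : ℕ} {S : Fin k → Set V} (h : Witness G k S)
    (hcov : ∀ v, ∃ i, v ∈ S i) : k ≤ grundy G := by
  have hcol : IsGreedyColoring G k S := by
    refine ⟨fun v => ?_, h.1, h.2.1, h.2.2⟩
    obtain ⟨i, hi⟩ := hcov v
    refine ⟨i, hi, fun j hj => ?_⟩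
    by_contra hne
    rcases lt_or_gt_of_ne hne with hlt | hlt
    · exact h.not_mem_mem hlt hi hj
    · exact h.not_mem_mem hlt hj hi
  exact le_csSup (bddAbove_colorings G) ⟨S, hcol⟩

lemma extend_aux [Fintype V] (G : SimpleGraph V) :
    ∀ n k : ℕ, ∀ S : Fin k → Set V, Witness G k S →
      {v | ∀ i, v ∉ S i}.ncard ≤ n → k ≤ grundy G := by
  classical
  intro n
  induction n with
  | zero =>
    intro k S hS hcard
    refine covered_le hS fun v => ?_
    by_contra hcon
    push_neg at hcon
    have hv : v ∈ {v | ∀ i, v ∉ S i} := hcon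
    have hU : {v | ∀ i, v ∉ S i} = ∅ :=
      Set.ncard_eq_zero (Set.toFinite _) |>.mp (Nat.le_zero.mp hcard)
    simp [hU] at hv
  | succ n ih =>
    intro k S hS hcard
    by_cases hU : {v | ∀ i, v ∉ S i} = ∅
    · refine covered_le hS fun v => ?_
      by_contra hcon
      push_neg at hcon
      have hv : v ∈ {v | ∀ i, v ∉ S i} := hcon
      simp [hU] at hv
    · obtain ⟨v, hv⟩ := Set.nonempty_iff_ne_empty.mpr hU
      have hvU : ∀ i, v ∉ S i := hv
      have hcard' : ({w | ∀ i, w ∉ S i} \ {v}).ncard ≤ n := by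
        have h2 := Set.ncard_diff_singleton_add_one hv (Set.toFinite _)
        omega
      by_cases hP : ∃ i : Fin k, ∀ w ∈ S i, ¬ G.Adj v w
      · -- insert v into the minimal available class
        obtain ⟨i₀, hi₀mem, hi₀min⟩ := Finset.exists_min_image
          (Finset.univ.filter fun i : Fin k => ∀ w ∈ S i, ¬ G.Adj v w) id
          (by obtain ⟨i, hi⟩ := hP; exact ⟨i, Finset.mem_filter.mpr ⟨Finset.mem_univ _, hi⟩⟩)
        simp only [Finset.mem_filter, Finset.mem_univ, true_and] at hi₀mem
        have hmin : ∀ j : Fin k, j < i₀ → ∃ w ∈ S j, G.Adj v w := by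
          intro j hj
          by_contra hc
          push_neg at hc
          have hjf : j ∈ Finset.univ.filter fun i : Fin k => ∀ w ∈ S i, ¬ G.Adj v w := by
            simp only [Finset.mem_filter, Finset.mem_univ, true_and]
            exact hc
          have := hi₀min j hjf
          simp only [id] at this
          exact absurd hj (not_lt.mpr this)
        set S' : Fin k → Set V := fun i => if i = i₀ then insert v (S i₀) else S i with hS'def
        have hsub : ∀ i, S i ⊆ S' i := by
          intro i w hw
          dsimp [S']
          split
          · next h => rw [h] at hw; exact Set.mem_insert_of_mem _ hw
          · exact hw
        have hW' : Witness G k S' := by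
          refine ⟨fun i => (hS.1 i).mono (hsub i), ?_, ?_⟩
          · intro i a ha b hb
            dsimp [S'] at ha hb
            split_ifs at ha hb with h
            · rcases ha with rfl | ha <;> rcases hb with rfl | hb
              · exact G.irrefl
              · exact hi₀mem b hb
              · exact fun hadj => hi₀mem a ha hadj.symm
              · exact hS.2.1 i₀ a ha b hb
            · exact hS.2.1 i a ha b hb
          · intro i j hlt u hu
            dsimp [S'] at hu
            split_ifs at hu with h
            · rcases hu with rfl | hu
              · obtain ⟨w, hw, hadj⟩ := hmin j (h ▸ hlt)
                exact ⟨w, hsub j hw, hadj⟩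
              · obtain ⟨w, hw, hadj⟩ := hS.2.2 i j hlt u (by rw [h]; exact hu)
                exact ⟨w, hsub j hw, hadj⟩
            · obtain ⟨w, hw, hadj⟩ := hS.2.2 i j hlt u hu
              exact ⟨w, hsub j hw, hadj⟩
        have hUeq : {w | ∀ i, w ∉ S' i} = {w | ∀ i, w ∉ S i} \ {v} := by
          ext w
          simp only [Set.mem_setOf_eq, Set.mem_diff, Set.mem_singleton_iff]
          constructor
          · intro hall
            refine ⟨fun i hwi => hall i (hsub i hwi), fun hwv => ?_⟩
            subst hwv
            exact hall i₀ (by dsimp [S']; rw [if_pos rfl]; exact Set.mem_insert _ _)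
          · rintro ⟨hall, hne⟩ i
            dsimp [S']
            split_ifs with h
            · intro hmem
              rcases hmem with rfl | hmem
              · exact hne rfl
              · exact hall i₀ hmem
            · exact hall i
        exact ih k S' hW' (by rw [hUeq]; exact hcard')
      · -- open a new class {v} on top
        push_neg at hP
        set S' : Fin (k + 1) → Set V := fun i =>
          if h : (i : ℕ) < k then S ⟨i, h⟩ else {v} with hS'def
        have hW' : Witness G (k + 1) S' := by
          refine ⟨?_, ?_, ?_⟩
          · intro i
            dsimp [S']
            split
            · exact hS.1 _
            · exact ⟨v, rfl⟩
          · intro i a ha b hb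
            dsimp [S'] at ha hb
            split_ifs at ha hb with h
            · exact hS.2.1 _ a ha b hb
            · rw [Set.mem_singleton_iff] at ha hb
              subst ha; subst hb; exact G.irrefl
          · intro i j hlt u hu
            have hj : (j : ℕ) < k := by
              have h1 : (j : ℕ) < (i : ℕ) := hlt
              have h2 : (i : ℕ) < k + 1 := i.isLt
              omega
            dsimp [S'] at hu ⊢
            rw [dif_pos hj]
            split_ifs at hu with h
            · obtain ⟨w, hw, hadj⟩ := hS.2.2 ⟨i, h⟩ ⟨j, hj⟩ (by rw [Fin.lt_def]; exact hlt) u hu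
              exact ⟨w, hw, hadj⟩
            · rw [Set.mem_singleton_iff] at hu
              subst hu
              obtain ⟨w, hw, hadj⟩ := hP ⟨j, hj⟩
              exact ⟨w, hw, hadj⟩
        have hUeq : {w | ∀ i, w ∉ S' i} = {w | ∀ i, w ∉ S i} \ {v} := by
          ext w
          simp only [Set.mem_setOf_eq, Set.mem_diff, Set.mem_singleton_iff]
          constructor
          · intro hall
            constructor
            · intro i
              have h2 := hall (Fin.castSucc i)
              dsimp [S'] at h2
              rw [if_pos i.isLt] at h2
              exact h2
            · intro hwv
              subst hwv
              have h2 := hall (Fin.last k)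
              dsimp [S'] at h2
              rw [dif_neg (lt_irrefl k)] at h2
              exact h2 rfl
          · rintro ⟨hall, hne⟩ i
            dsimp [S']
            split_ifs with h
            · exact hall ⟨i, h⟩
            · simpa using hne
        have := ih (k + 1) S' hW' (by rw [hUeq]; exact hcard')
        omega

lemma Witness.le_grundy [Fintype V] {k : ℕ} {S : Fin k → Set V} (h : Witness G k S) :
    k ≤ grundy G :=
  extend_aux G _ k S h le_rfl

end GrundyAux
namespace GrundyAux

variable {β : Type*} [Fintype β] {H : SimpleGraph β}

lemma no_triangle (hH : grundy H = 2) {v a b : β}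
    (hva : H.Adj v a) (hvb : H.Adj v b) (hab : H.Adj a b) : False := by
  classical
  have hw : Witness H 3 ![({b} : Set β), {a}, {v}] := by
    refine ⟨?_, ?_, ?_⟩
    · intro i; fin_cases i <;> simp
    · intro i x hx y hy
      fin_cases i <;> simp at hx hy <;> subst hx <;> subst hy <;> exact H.irrefl
    · intro i j hij x hx
      fin_cases i <;> fin_cases j <;>
        first
          | exact absurd hij (by decide)
          | (simp at hx ⊢; subst hx)
      · exact hab
      · exact hvb
      · exact hva
  have := hw.le_grundy
  omega

lemma twin (hH : grundy H = 2) {r b b' z : β} (h1 : H.Adj r b) (h2 : H.Adj r b')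
    (h3 : H.Adj b z) : H.Adj b' z := by
  classical
  by_cases he : b' = z
  · subst he
    exact (no_triangle hH h1 h2 h3).elim
  · by_contra hnadj
    have hw : Witness H 3 ![({b', z} : Set β), {b}, {r}] := by
      refine ⟨?_, ?_, ?_⟩
      · intro i; fin_cases i <;> simp
      · intro i x hx y hy
        fin_cases i
        · simp only [Matrix.cons_val_zero, Set.mem_insert_iff, Set.mem_singleton_iff] at hx hy
          rcases hx with rfl | rfl <;> rcases hy with rfl | rfl
          · exact H.irrefl
          · exact hnadj
          · exact fun h => hnadj h.symm
          · exact H.irrefl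
        · simp at hx hy; subst hx; subst hy; exact H.irrefl
        · simp at hx hy; subst hx; subst hy; exact H.irrefl
      · intro i j hij x hx
        fin_cases i <;> fin_cases j <;>
          first
            | exact absurd hij (by decide)
            | (simp at hx ⊢; subst hx)
        · exact Or.inr h3
        · exact Or.inl h2
        · exact h1
    have := hw.le_grundy
    omega

end GrundyAux

/-- If `Γ(H) = 2`, then for every finite graph `G`, `Γ(G × H) = Γ(G × K_2)`. -/
theorem grundy_tensorProd_eq_tensorProd_K2 {β : Type*} [Fintype β]
    (H : SimpleGraph β) (hH : grundy H = 2)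
    {α : Type*} [Fintype α] (G : SimpleGraph α) :
    grundy (tensorProd G H) =
      grundy (tensorProd G (⊤ : SimpleGraph (Fin 2))) := by
  classical
  obtain ⟨u₀, v₀, huv⟩ : ∃ u v, H.Adj u v := by
    have hmem : grundy H ∈ {k | ∃ S : Fin k → Set β, IsGreedyColoring H k S} := by
      apply Nat.sSup_mem ?_ (GrundyAux.bddAbove_colorings H)
      by_contra hne
      rw [Set.not_nonempty_iff_eq_empty] at hne
      unfold grundy at hH
      rw [hne, csSup_empty] at hH
      simp at hH
    rw [hH] at hmem
    obtain ⟨S₂, hS₂⟩ := hmem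
    obtain ⟨v1, hv1⟩ := hS₂.2.1 1
    obtain ⟨u1, hu1, hadj⟩ := hS₂.2.2.2 1 0 (by decide) v1 hv1
    exact ⟨v1, u1, hadj⟩
  apply le_antisymm
  · -- Γ(G×H) ≤ Γ(G×K₂)
    by_cases hLn : {k | ∃ S : Fin k → Set (α × β),
        IsGreedyColoring (tensorProd G H) k S}.Nonempty
    swap
    · unfold grundy
      rw [Set.not_nonempty_iff_eq_empty.mp hLn, csSup_empty]
      exact bot_le
    unfold grundy
    refine csSup_le hLn ?_
    rintro k ⟨S, hS⟩
    have hk : k ≤ grundy (tensorProd G (⊤ : SimpleGraph (Fin 2))) := by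
      obtain _ | _ | k := k
      · exact Nat.zero_le _
      · obtain ⟨⟨g, x⟩, hg⟩ := hS.2.1 0
        have hw : GrundyAux.Witness (tensorProd G (⊤ : SimpleGraph (Fin 2))) 1
            (fun _ => {(g, (0 : Fin 2))}) := by
          refine ⟨fun _ => ⟨_, rfl⟩, ?_, ?_⟩
          · intro i p hp q hq
            rw [Set.mem_singleton_iff] at hp hq
            subst hp; subst hq
            exact (tensorProd G ⊤).irrefl
          · intro i j hij
            exact absurd hij (by omega)
        exact hw.le_grundy
      · set it : Fin (k + 2) := ⟨k + 1, by omega⟩ with hit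
        obtain ⟨⟨gs, xs⟩, hxs⟩ := hS.2.1 it
        obtain ⟨⟨g₁, b₀⟩, hb₀mem, hadj₀⟩ :=
          hS.2.2.2 it ⟨0, by omega⟩ (by rw [Fin.lt_def]; simp [hit]) (gs, xs) hxs
        have hxb : H.Adj xs b₀ := hadj₀.2
        set A : Set β := {x | H.Adj b₀ x} with hA
        set B : Set β := {x | H.Adj xs x} with hB
        have hxA : xs ∈ A := hxb.symm
        have hABdisj : ∀ x, x ∈ A → x ∈ B → False := fun x h1 h2 =>
          GrundyAux.no_triangle hH hxb h2 h1
        have hcomp : ∀ a ∈ A, ∀ bb ∈ B, H.Adj a bb := fun a ha bb hb =>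
          GrundyAux.twin hH hxb.symm ha hb
        have hclosedA : ∀ x ∈ A, ∀ y, H.Adj x y → y ∈ B := fun x hx y hxy =>
          GrundyAux.twin hH hx hxb.symm hxy
        have hclosedB : ∀ x ∈ B, ∀ y, H.Adj x y → y ∈ A := fun x hx y hxy =>
          GrundyAux.twin hH hx hxb hxy
        set T : Fin (k + 2) → Set (α × Fin 2) := fun i =>
          {p | ∃ gx : α × β, gx ∈ S i ∧ (gx.2 ∈ A ∨ gx.2 ∈ B) ∧
            p = (gx.1, if gx.2 ∈ A then 0 else 1)} with hT
        have hw : GrundyAux.Witness (tensorProd G (⊤ : SimpleGraph (Fin 2))) (k + 2) T := by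
          refine ⟨?_, ?_, ?_⟩
          · intro i
            by_cases hi : i = it
            · subst hi
              exact ⟨_, ⟨(gs, xs), hxs, Or.inl hxA, rfl⟩⟩
            · have hlt : i < it := by
                rw [Fin.lt_def]
                have h1 := i.isLt
                have h2 : (i : ℕ) ≠ k + 1 := fun h => hi (Fin.ext (by simp [hit, h]))
                simp [hit]; omega
              obtain ⟨⟨g', y⟩, hy, hadjy⟩ := hS.2.2.2 it i hlt (gs, xs) hxs
              exact ⟨_, ⟨(g', y), hy, Or.inr (hclosedA xs hxA y hadjy.2), rfl⟩⟩
          · rintro i p ⟨⟨g, x⟩, hmem, hside, rfl⟩ q ⟨⟨g', y⟩, hmem', hside', rfl⟩ hadj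
            have hGg : G.Adj g g' := hadj.1
            have hne : (if x ∈ A then (0 : Fin 2) else 1) ≠ (if y ∈ A then 0 else 1) :=
              (SimpleGraph.top_adj _ _).mp hadj.2
            by_cases hx : x ∈ A
            · have hy' : y ∉ A := by
                intro hy'
                rw [if_pos hx, if_pos hy'] at hne
                exact hne rfl
              have hyB : y ∈ B := hside'.resolve_left hy'
              exact hS.2.2.1 i _ hmem _ hmem' ⟨hGg, hcomp x hx y hyB⟩
            · have hxB : x ∈ B := hside.resolve_left hx
              have hy' : y ∈ A := by
                by_contra hy'
                rw [if_neg hx, if_neg hy'] at hne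
                exact hne rfl
              exact hS.2.2.1 i _ hmem _ hmem' ⟨hGg, (hcomp y hy' x hxB).symm⟩
          · rintro i j hij p ⟨⟨g, x⟩, hmem, hside, rfl⟩
            obtain ⟨⟨g', y⟩, hy, hadjy⟩ := hS.2.2.2 i j hij (g, x) hmem
            refine ⟨(g', if y ∈ A then 0 else 1), ⟨(g', y), hy, ?_, rfl⟩, hadjy.1, ?_⟩
            · rcases hside with hx | hx
              · exact Or.inr (hclosedA x hx y hadjy.2)
              · exact Or.inl (hclosedB x hx y hadjy.2)
            · rw [SimpleGraph.top_adj]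
              rcases hside with hx | hx
              · have hyB : y ∈ B := hclosedA x hx y hadjy.2
                have hyA : y ∉ A := fun h => hABdisj y h hyB
                rw [if_pos hx, if_neg hyA]
                simp
              · have hyA : y ∈ A := hclosedB x hx y hadjy.2
                have hxA' : x ∉ A := fun h => hABdisj x h hx
                rw [if_neg hxA', if_pos hyA]
                simp
        exact hw.le_grundy
    exact hk
  · -- Γ(G×K₂) ≤ Γ(G×H)
    by_cases hLn : {k | ∃ S : Fin k → Set (α × Fin 2),
        IsGreedyColoring (tensorProd G (⊤ : SimpleGraph (Fin 2))) k S}.Nonempty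
    swap
    · conv_lhs => unfold grundy
      rw [Set.not_nonempty_iff_eq_empty.mp hLn, csSup_empty]
      exact bot_le
    conv_lhs => unfold grundy
    refine csSup_le hLn ?_
    rintro k ⟨S, hS⟩
    set e : Fin 2 → β := fun t => if t = 0 then u₀ else v₀ with he
    have hadj_e : ∀ t t' : Fin 2, t ≠ t' → H.Adj (e t) (e t') := by
      intro t t' ht
      fin_cases t <;> fin_cases t' <;> simp_all [he] <;>
        first
          | exact huv
          | exact huv.symm
    have hw : GrundyAux.Witness (tensorProd G H) k
        (fun i => {p | ∃ gt : α × Fin 2, gt ∈ S i ∧ p = (gt.1, e gt.2)}) := by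
      refine ⟨?_, ?_, ?_⟩
      · intro i
        obtain ⟨⟨g, t⟩, hg⟩ := hS.2.1 i
        exact ⟨(g, e t), ⟨(g, t), hg, rfl⟩⟩
      · rintro i p ⟨⟨g, t⟩, hmem, rfl⟩ q ⟨⟨g', t'⟩, hmem', rfl⟩ hadj
        by_cases ht : t = t'
        · subst ht
          exact H.irrefl hadj.2
        · exact hS.2.2.1 i _ hmem _ hmem' ⟨hadj.1, (SimpleGraph.top_adj _ _).mpr ht⟩
      · rintro i j hij p ⟨⟨g, t⟩, hmem, rfl⟩
        obtain ⟨⟨g', t'⟩, hmem', hadj⟩ := hS.2.2.2 i j hij (g, t) hmem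
        exact ⟨(g', e t'), ⟨(g', t'), hmem', rfl⟩, hadj.1,
          hadj_e t t' ((SimpleGraph.top_adj _ _).mp hadj.2)⟩
    exact hw.le_grundy
end
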